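/- arXiv:1203.2377 — 5 statements merged into one kernel-verified Lean document; each statement's English description precedes it below -/
import Mathlib

section
/- Suppose A^S = [B G] Pᵗ where P is a permutation matrix, Y B = A, Y G = 0, G has full column rank, and A is nonsingular. Then A^S is nonsingular. -/
open Matrix

/-- The permutation matrix associated with a bijection `e` between (finite) index types. -/
noncomputable def permMat {κ γ : Type*} [DecidableEq γ] (e : κ ≃ γ) : Matrix κ γ ℝ :=
  Matrix.of fun k c => if e k = c then 1 else 0

/-- Theorem 2 (nonsingularity): if `A^S = [B G] Pᵗ` is a row stretching of a nonsingular
matrix `A` (i.e. `Y B = A`, `Y G = 0`, `G` of full column rank, `Y` of full row rank,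
`P` a permutation matrix), then `A^S` is nonsingular. -/
theorem row_stretching_nonsingular {n k : ℕ}
    (A : Matrix (Fin n) (Fin n) ℝ)
    (B : Matrix (Fin n ⊕ Fin k) (Fin n) ℝ)
    (G : Matrix (Fin n ⊕ Fin k) (Fin k) ℝ)
    (e : (Fin n ⊕ Fin k) ≃ (Fin n ⊕ Fin k))
    (Y : Matrix (Fin n) (Fin n ⊕ Fin k) ℝ)
    (hYB : Y * B = A) (hYG : Y * G = 0)
    (hG : LinearIndependent ℝ Gᵀ)
    (hY : LinearIndependent ℝ Y)
    (hA : IsUnit A.det) :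
    IsUnit (fromCols B G * (permMat e)ᵀ).det := by
  rw [det_mul]
  apply IsUnit.mul
  · -- [B G] is nonsingular
    rw [← Matrix.isUnit_iff_isUnit_det, ← mulVec_injective_iff_isUnit]
    have key : ∀ v, fromCols B G *ᵥ v = 0 → v = 0 := by
      intro v hv
      have hv' : v = Sum.elim (v ∘ Sum.inl) (v ∘ Sum.inr) := by
        funext i; cases i <;> rfl
      rw [hv', fromCols_mulVec_sumElim] at hv
      have hY0 : Y *ᵥ (B *ᵥ (v ∘ Sum.inl) + G *ᵥ (v ∘ Sum.inr)) = 0 := by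
        rw [hv, mulVec_zero]
      rw [mulVec_add, mulVec_mulVec, mulVec_mulVec, hYB, hYG, zero_mulVec,
        add_zero] at hY0
      have hAinj : Function.Injective A.mulVec := mulVec_injective_iff_isUnit.mpr ((Matrix.isUnit_iff_isUnit_det A).mpr hA)
      have h1 : v ∘ Sum.inl = 0 := by
        apply hAinj
        rw [hY0, mulVec_zero]
      rw [h1, mulVec_zero, zero_add] at hv
      have hGinj : Function.Injective G.mulVec := Matrix.mulVec_injective_iff.mpr hG
      have h2 : v ∘ Sum.inr = 0 := by
        apply hGinj
        rw [hv, mulVec_zero]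
      rw [hv', h1, h2]
      funext i; cases i <;> rfl
    intro x y hxy
    have := key (x - y) (by rw [mulVec_sub, hxy, sub_self])
    exact sub_eq_zero.mp this
  · -- the permutation matrix is nonsingular
    have hmul : permMat e * (permMat e)ᵀ = 1 := by
      ext i j
      simp only [mul_apply, permMat, transpose_apply, of_apply, one_apply]
      simp only [ite_mul, one_mul, zero_mul]
      rw [Finset.sum_ite_eq]
      simp [e.injective.eq_iff, eq_comm]
    have h2 := congrArg Matrix.det hmul
    rw [det_mul, det_one] at h2
    
    rw [det_transpose] at h2 ⊢
    exact IsUnit.of_mul_eq_one _ h2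
end

section
/- Under the row-stretching hypotheses (A^S = [B G]Pᵗ with Y B = A, Y G = 0, G of full column rank, A nonsingular), with X̄ := [I 0] Pᵗ and Ȳ any right inverse of Y, one has A⁻¹ = X̄ (A^S)⁻¹ Ȳ. -/
open Matrix

lemma permMat_mul_transpose {κ γ : Type*} [Fintype γ] [DecidableEq κ] [DecidableEq γ]
    (e : κ ≃ γ) : permMat e * (permMat e)ᵀ = 1 := by
  ext i j
  simp only [mul_apply, permMat, transpose_apply, of_apply, ite_mul, one_mul, zero_mul,
    Matrix.one_apply]
  rw [Finset.sum_ite_eq (Finset.univ) (e i) (fun c => if e j = c then (1:ℝ) else 0)]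
  simp [e.apply_eq_iff_eq, eq_comm]

lemma permMat_transpose {κ γ : Type*} [DecidableEq κ] [DecidableEq γ]
    (e : κ ≃ γ) : (permMat e)ᵀ = permMat e.symm := by
  ext i j
  simp only [transpose_apply, permMat, of_apply]
  congr 1
  simp [Equiv.eq_symm_apply, eq_comm]

lemma transpose_mul_permMat {κ γ : Type*} [Fintype κ] [DecidableEq κ] [DecidableEq γ]
    (e : κ ≃ γ) : (permMat e)ᵀ * permMat e = 1 := by
  rw [permMat_transpose]
  have := permMat_mul_transpose e.symm
  rwa [permMat_transpose, Equiv.symm_symm] at this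

/-- Theorem 2 (inverse formula): under the row-stretching hypotheses
(`A^S = [B G]Pᵗ`, `Y B = A`, `Y G = 0`, `G` of full column rank, `Y` of full row rank,
`A` nonsingular, `A^S` nonsingular), with `X̄ := [I 0] Pᵗ` and `Ȳ` any right inverse
of `Y`, one has `A⁻¹ = X̄ (A^S)⁻¹ Ȳ`. -/
theorem row_stretching_inverse {n k : ℕ}
    (A : Matrix (Fin n) (Fin n) ℝ)
    (B : Matrix (Fin n ⊕ Fin k) (Fin n) ℝ)
    (G : Matrix (Fin n ⊕ Fin k) (Fin k) ℝ)
    (e : (Fin n ⊕ Fin k) ≃ (Fin n ⊕ Fin k))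
    (Y : Matrix (Fin n) (Fin n ⊕ Fin k) ℝ)
    (Ybar : Matrix (Fin n ⊕ Fin k) (Fin n) ℝ)
    (hYB : Y * B = A) (hYG : Y * G = 0)
    (hG : LinearIndependent ℝ Gᵀ)
    (hY : LinearIndependent ℝ Y)
    (hA : IsUnit A.det)
    (hAS : IsUnit (fromCols B G * (permMat e)ᵀ).det)
    (hYbar : Y * Ybar = 1) :
    A⁻¹ = (fromCols (1 : Matrix (Fin n) (Fin n) ℝ) (0 : Matrix (Fin n) (Fin k) ℝ) *
        (permMat e)ᵀ) * (fromCols B G * (permMat e)ᵀ)⁻¹ * Ybar := by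
  set P := permMat e with hP
  have hPPt : P * Pᵀ = 1 := permMat_mul_transpose e
  have hPtP : Pᵀ * P = 1 := transpose_mul_permMat e
  have hPt_unit : IsUnit (Pᵀ).det := IsUnit.of_mul_eq_one P.det
    (by rw [← Matrix.det_mul, hPtP, Matrix.det_one])
  have hPt_inv : (Pᵀ)⁻¹ = P := Matrix.inv_eq_right_inv hPtP
  set M := fromCols B G with hM
  have hMdet : IsUnit M.det := by
    have := hAS
    rw [Matrix.det_mul] at this
    exact isUnit_of_mul_isUnit_left this
  have hinv : (M * Pᵀ)⁻¹ = P * M⁻¹ := by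
    rw [Matrix.mul_inv_rev, hPt_inv]
  have key : A * ((fromCols (1 : Matrix (Fin n) (Fin n) ℝ) (0 : Matrix (Fin n) (Fin k) ℝ) * Pᵀ) * (M * Pᵀ)⁻¹ * Ybar) = 1 := by
    rw [hinv]
    have h1 : (fromCols (1 : Matrix (Fin n) (Fin n) ℝ) (0 : Matrix (Fin n) (Fin k) ℝ) * Pᵀ) * (P * M⁻¹)
        = fromCols (1 : Matrix (Fin n) (Fin n) ℝ) (0 : Matrix (Fin n) (Fin k) ℝ) * M⁻¹ := by
      rw [Matrix.mul_assoc, ← Matrix.mul_assoc Pᵀ, hPtP, Matrix.one_mul]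
    rw [h1]
    have h2 : A * (fromCols (1 : Matrix (Fin n) (Fin n) ℝ) (0 : Matrix (Fin n) (Fin k) ℝ)) = Y * M := by
      rw [hM, Matrix.mul_fromCols, Matrix.mul_fromCols, hYB, hYG, Matrix.mul_one,
        Matrix.mul_zero]
    rw [← Matrix.mul_assoc, ← Matrix.mul_assoc, h2, Matrix.mul_assoc Y,
      Matrix.mul_nonsing_inv _ hMdet, Matrix.mul_one, hYbar]
  exact Matrix.inv_eq_right_inv key
end

section
/- Let A be partitioned as A = [A₁; A₂] (rows), with columns partitioned into m blocks, and let A^S be the simple row stretching of A using nonsingular matrices D₁,…,D_{m−1} (without reordering). Then det A^S = det A · ∏_{j=1}^{m−1} det D_j. -/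
open Matrix

section Helpers
open Finset

lemma sum_ite_val_succ {m : ℕ} (s : Fin m) (c : ℝ) :
    ∑ t : Fin m, (if (s : ℕ) = (t : ℕ) + 1 then c else 0) =
      if (s : ℕ) = 0 then 0 else c := by
  by_cases h : (s : ℕ) = 0
  · simp [h]
  · have hm : (s : ℕ) - 1 < m := by omega
    have : ∀ t : Fin m, ((s : ℕ) = (t : ℕ) + 1) ↔ t = ⟨(s : ℕ) - 1, hm⟩ := by
      intro t
      constructor
      · intro ht; exact Fin.ext (by simp only []; show (t:ℕ) = (s:ℕ)-1; omega)
      · rintro rfl; simp; omega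
    simp only [this, Finset.sum_ite_eq' univ _ (fun _ => c), mem_univ, if_true, h, if_false]

lemma sum_ite_val_eq {m : ℕ} (s : Fin m) (c : ℝ) :
    ∑ t : Fin m, (if (s : ℕ) + 1 = (t : ℕ) + 1 then c else 0) = c := by
  have : ∀ t : Fin m, ((s : ℕ) + 1 = (t : ℕ) + 1) ↔ t = s := by
    intro t
    constructor
    · intro ht; exact Fin.ext (by omega)
    · rintro rfl; rfl
  simp only [this, Finset.sum_ite_eq' univ _ (fun _ => c), mem_univ, if_true]

lemma sum_ite_fin_succ {m : ℕ} (s : Fin (m + 1)) (c : ℝ) :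
    ∑ t : Fin m, (if s = t.succ then c else 0) = if s = 0 then 0 else c := by
  by_cases h : s = 0
  · simp [h, (Fin.succ_ne_zero _).symm]
  · have : ∀ t : Fin m, (s = t.succ) ↔ t = s.pred h := by
      intro t
      constructor
      · intro ht; subst ht; simp
      · rintro rfl; rw [Fin.succ_pred]
    simp only [this, Finset.sum_ite_eq' univ _ (fun _ => c), mem_univ, if_true, h, if_false]

end Helpers

/-- The original matrix `A = [A₁; A₂]` with row blocks `A₁` (p rows) and `A₂` (q rows)
and columns partitioned into `m = m' + 1` blocks of sizes `nn j`. -/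
def origMat {p q m' : ℕ} (nn : Fin (m' + 1) → ℕ)
    (A₁ : ∀ j, Matrix (Fin p) (Fin (nn j)) ℝ)
    (A₂ : ∀ j, Matrix (Fin q) (Fin (nn j)) ℝ) :
    Matrix (Fin p ⊕ Fin q) (Σ j, Fin (nn j)) ℝ :=
  Matrix.of fun r c =>
    match r with
    | Sum.inl i => A₁ c.1 i c.2
    | Sum.inr i => A₂ c.1 i c.2

/-- The simple row stretching of `A` (without reordering): the `A₁` rows are kept, the
dense row block `A₂` is stretched into `m = m' + 1` row blocks, block `j` carrying
`A₂ⱼ` together with glue entries `+D_{j-1}` and `−D_j` in the new columns. -/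
def simpleRowStretch {p q m' : ℕ} (nn : Fin (m' + 1) → ℕ)
    (A₁ : ∀ j, Matrix (Fin p) (Fin (nn j)) ℝ)
    (A₂ : ∀ j, Matrix (Fin q) (Fin (nn j)) ℝ)
    (D : Fin m' → Matrix (Fin q) (Fin q) ℝ) :
    Matrix (Fin p ⊕ (Fin (m' + 1) × Fin q)) ((Σ j, Fin (nn j)) ⊕ (Fin m' × Fin q)) ℝ :=
  Matrix.of fun r c =>
    match r, c with
    | Sum.inl i, Sum.inl c => A₁ c.1 i c.2
    | Sum.inl _, Sum.inr _ => 0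
    | Sum.inr (j, i), Sum.inl c => if c.1 = j then A₂ c.1 i c.2 else 0
    | Sum.inr (j, i), Sum.inr (t, cc) =>
        (if (t : ℕ) = (j : ℕ) then -(D t i cc) else 0) +
          (if (t : ℕ) + 1 = (j : ℕ) then D t i cc else 0)

/-- Theorem 4: for a simple row stretching (without reordering) with nonsingular glue
matrices `D₁, …, D_{m−1}`, one has `det A^S = det A · ∏ⱼ det Dⱼ`.  Here `e` aligns the
rows of `A` with its columns (so `A` is square) and `F` is the induced positional
alignment of the rows of `A^S` with its columns. -/
theorem simple_row_stretch_det {p q m' : ℕ} (nn : Fin (m' + 1) → ℕ)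
    (A₁ : ∀ j, Matrix (Fin p) (Fin (nn j)) ℝ)
    (A₂ : ∀ j, Matrix (Fin q) (Fin (nn j)) ℝ)
    (D : Fin m' → Matrix (Fin q) (Fin q) ℝ)
    (hD : ∀ t, IsUnit (D t).det)
    (e : (Fin p ⊕ Fin q) ≃ (Σ j, Fin (nn j)))
    (F : (Fin p ⊕ (Fin (m' + 1) × Fin q)) ≃ ((Σ j, Fin (nn j)) ⊕ (Fin m' × Fin q)))
    (hF1 : ∀ i : Fin p, F (Sum.inl i) = Sum.inl (e (Sum.inl i)))
    (hF2 : ∀ i : Fin q, F (Sum.inr (0, i)) = Sum.inl (e (Sum.inr i)))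
    (hF3 : ∀ (t : Fin m') (i : Fin q), F (Sum.inr (t.succ, i)) = Sum.inr (t, i)) :
    ((simpleRowStretch nn A₁ A₂ D).submatrix id F).det =
      ((origMat nn A₁ A₂).submatrix id e).det * ∏ t, (D t).det := by
  classical
  set S := simpleRowStretch nn A₁ A₂ D with hS
  -- reindexing equivalence
  let ρ : ((Fin p ⊕ Fin q) ⊕ (Fin m' × Fin q)) ≃ (Fin p ⊕ (Fin (m' + 1) × Fin q)) :=
    { toFun := fun x => match x with
        | Sum.inl (Sum.inl i) => Sum.inl i
        | Sum.inl (Sum.inr i) => Sum.inr (0, i)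
        | Sum.inr (t, i) => Sum.inr (t.succ, i)
      invFun := fun x => match x with
        | Sum.inl i => Sum.inl (Sum.inl i)
        | Sum.inr (j, i) =>
            if h : j = 0 then Sum.inl (Sum.inr i) else Sum.inr (j.pred h, i)
      left_inv := by
        rintro ((i | i) | ⟨t, i⟩)
        · rfl
        · simp
        · simp [Fin.succ_ne_zero, Fin.pred_succ]
      right_inv := by
        rintro (i | ⟨j, i⟩)
        · rfl
        · by_cases h : j = 0
          · subst h; simp
          · simp [h, Fin.succ_pred] }
  let Asub := (origMat nn A₁ A₂).submatrix id e
  let M₂ := (S.submatrix id F).submatrix ρ ρ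
  have hdet2 : (S.submatrix id F).det = M₂.det :=
    (Matrix.det_submatrix_equiv_self ρ _).symm
  let B : Matrix (Fin p ⊕ Fin q) (Fin m' × Fin q) ℝ :=
    Matrix.of fun r c => match r with
      | Sum.inl _ => 0
      | Sum.inr i => if c.2 = i then 1 else 0
  let L : Matrix ((Fin p ⊕ Fin q) ⊕ (Fin m' × Fin q))
      ((Fin p ⊕ Fin q) ⊕ (Fin m' × Fin q)) ℝ := fromBlocks 1 B 0 1
  have hL : L.det = 1 := by
    simp [L, Matrix.det_fromBlocks_zero₂₁]
  -- uniform description of F ∘ ρ on the original columns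
  have hFρ : ∀ c : Fin p ⊕ Fin q, F (ρ (Sum.inl c)) = Sum.inl (e c) := by
    rintro (i | i)
    · exact hF1 i
    · exact hF2 i
  -- entries of N
  have hN : ∀ (t : Fin m') (k : Fin q) (s : Fin m') (i' : Fin q),
      M₂.toBlocks₂₂ (t, k) (s, i') =
        (if (s : ℕ) = (t : ℕ) + 1 then -(D s k i') else 0) +
          (if (s : ℕ) + 1 = (t : ℕ) + 1 then D s k i' else 0) := by
    intro t k s i'
    show S (Sum.inr (t.succ, k)) (F (Sum.inr (s.succ, i'))) = _
    rw [hF3]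
    show (if (s : ℕ) = ((t.succ : Fin (m'+1)) : ℕ) then -(D s k i') else 0) +
        (if (s : ℕ) + 1 = ((t.succ : Fin (m'+1)) : ℕ) then D s k i' else 0) = _
    rw [Fin.val_succ]
  -- top-left block after the row operation
  have hTL : M₂.toBlocks₁₁ + B * M₂.toBlocks₂₁ = Asub := by
    ext r c
    cases r with
    | inl i =>
      have hB0 : (B * M₂.toBlocks₂₁) (Sum.inl i) c = 0 := by
        rw [Matrix.mul_apply]; simp [B]
      rw [Matrix.add_apply, hB0, add_zero]
      have h1 : M₂.toBlocks₁₁ (Sum.inl i) c = A₁ (e c).1 i (e c).2 := by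
        show S (Sum.inl i) (F (ρ (Sum.inl c))) = _
        rw [hFρ]; rfl
      rw [h1]; rfl
    | inr i =>
      have h1 : M₂.toBlocks₁₁ (Sum.inr i) c =
          (if (e c).1 = 0 then A₂ (e c).1 i (e c).2 else 0) := by
        show S (Sum.inr (0, i)) (F (ρ (Sum.inl c))) = _
        rw [hFρ]; rfl
      have h2 : (B * M₂.toBlocks₂₁) (Sum.inr i) c =
          (if (e c).1 = 0 then 0 else A₂ (e c).1 i (e c).2) := by
        rw [Matrix.mul_apply]
        have hz : ∀ j : Fin m' × Fin q, B (Sum.inr i) j * M₂.toBlocks₂₁ j c =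
            (if j.2 = i then 1 else 0) *
              (if (e c).1 = j.1.succ then A₂ (e c).1 j.2 (e c).2 else 0) := by
          rintro ⟨t, k⟩
          have hz1 : M₂.toBlocks₂₁ (t, k) c =
              (if (e c).1 = t.succ then A₂ (e c).1 k (e c).2 else 0) := by
            show S (Sum.inr (t.succ, k)) (F (ρ (Sum.inl c))) = _
            rw [hFρ]; rfl
          rw [hz1]; rfl
        simp only [hz]
        rw [Fintype.sum_prod_type]
        have : ∀ t : Fin m', (∑ k : Fin q, (if k = i then (1:ℝ) else 0) *
            (if (e c).1 = t.succ then A₂ (e c).1 k (e c).2 else 0)) =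
            (if (e c).1 = t.succ then A₂ (e c).1 i (e c).2 else 0) := by
          intro t
          simp [ite_mul, Finset.sum_ite_eq']
        simp only [this]
        exact sum_ite_fin_succ _ _
      rw [Matrix.add_apply, h1, h2]
      by_cases h : (e c).1 = 0 <;> simp [h, Asub, origMat]
  -- top-right block after the row operation
  have hTR : M₂.toBlocks₁₂ + B * M₂.toBlocks₂₂ = 0 := by
    ext r c
    obtain ⟨s, i'⟩ := c
    cases r with
    | inl i =>
      have hB0 : (B * M₂.toBlocks₂₂) (Sum.inl i) (s, i') = 0 := by
        rw [Matrix.mul_apply]; simp [B]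
      have h1 : M₂.toBlocks₁₂ (Sum.inl i) (s, i') = 0 := by
        show S (Sum.inl i) (F (Sum.inr (s.succ, i'))) = 0
        rw [hF3]; rfl
      rw [Matrix.add_apply, hB0, h1, add_zero]; rfl
    | inr i =>
      have h1 : M₂.toBlocks₁₂ (Sum.inr i) (s, i') =
          (if (s : ℕ) = 0 then -(D s i i') else 0) := by
        show S (Sum.inr (0, i)) (F (Sum.inr (s.succ, i'))) = _
        rw [hF3]
        show (if (s : ℕ) = ((0 : Fin (m'+1)) : ℕ) then -(D s i i') else 0) +
            (if (s : ℕ) + 1 = ((0 : Fin (m'+1)) : ℕ) then D s i i' else 0) = _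
        simp
        rfl
      have h2 : (B * M₂.toBlocks₂₂) (Sum.inr i) (s, i') =
          (if (s : ℕ) = 0 then 0 else -(D s i i')) + D s i i' := by
        rw [Matrix.mul_apply]
        have hz : ∀ j : Fin m' × Fin q, B (Sum.inr i) j * M₂.toBlocks₂₂ j (s, i') =
            (if j.2 = i then 1 else 0) *
              ((if (s : ℕ) = (j.1 : ℕ) + 1 then -(D s j.2 i') else 0) +
                (if (s : ℕ) + 1 = (j.1 : ℕ) + 1 then D s j.2 i' else 0)) := by
          rintro ⟨t, k⟩
          rw [hN]; rfl
        simp only [hz]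
        rw [Fintype.sum_prod_type]
        have : ∀ t : Fin m', (∑ k : Fin q, (if k = i then (1:ℝ) else 0) *
            ((if (s : ℕ) = (t : ℕ) + 1 then -(D s k i') else 0) +
              (if (s : ℕ) + 1 = (t : ℕ) + 1 then D s k i' else 0))) =
            ((if (s : ℕ) = (t : ℕ) + 1 then -(D s i i') else 0) +
              (if (s : ℕ) + 1 = (t : ℕ) + 1 then D s i i' else 0)) := by
          intro t
          simp [ite_mul, Finset.sum_ite_eq']
        simp only [this]
        rw [Finset.sum_add_distrib, sum_ite_val_succ, sum_ite_val_eq]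
      rw [Matrix.add_apply, h1, h2]
      by_cases h : (s : ℕ) = 0 <;> simp [h]
  -- the product identity
  have hsplit : L * M₂ = fromBlocks Asub 0 M₂.toBlocks₂₁ M₂.toBlocks₂₂ := by
    conv_lhs => rw [← fromBlocks_toBlocks M₂]
    rw [fromBlocks_multiply]
    rw [Matrix.one_mul, Matrix.one_mul, Matrix.zero_mul, Matrix.zero_mul,
      Matrix.one_mul, Matrix.one_mul, zero_add, zero_add, hTL, hTR]
  -- determinant of N
  have hNtri : M₂.toBlocks₂₂.BlockTriangular Prod.fst := by
    rintro ⟨t, k⟩ ⟨s, i'⟩ hlt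
    have hlt' : (s : ℕ) < (t : ℕ) := hlt
    rw [hN]
    have h1 : ¬((s : ℕ) = (t : ℕ) + 1) := by omega
    have h2 : ¬((s : ℕ) + 1 = (t : ℕ) + 1) := by omega
    simp [h1, h2]
    exact fun h => absurd h (by omega)
  have hNdet : M₂.toBlocks₂₂.det = ∏ t, (D t).det := by
    rw [hNtri.det_fintype]
    refine Finset.prod_congr rfl fun k _ => ?_
    let σ : {a : Fin m' × Fin q // a.1 = k} ≃ Fin q :=
      { toFun := fun a => a.1.2
        invFun := fun i => ⟨(k, i), rfl⟩
        left_inv := by rintro ⟨⟨t, i⟩, rfl⟩; rfl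
        right_inv := fun i => rfl }
    have hblock : M₂.toBlocks₂₂.toSquareBlock Prod.fst k = (D k).submatrix σ σ := by
      ext a b
      obtain ⟨⟨t, i⟩, ht⟩ := a
      obtain ⟨⟨s, i'⟩, hs⟩ := b
      have ht' : t = k := ht
      have hs' : s = t := Eq.trans (hs : s = k) ht'.symm
      subst hs'
      subst ht'
      show M₂.toBlocks₂₂ (s, i) (s, i') = D s i i'
      rw [hN]
      simp
    rw [hblock, Matrix.det_submatrix_equiv_self]
  -- assembly
  rw [hdet2, ← one_mul M₂.det, ← hL, ← Matrix.det_mul, hsplit,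
    Matrix.det_fromBlocks_zero₁₂, hNdet]
end

section
/- The composition of two row stretchings is a row stretching: if A → A^S via (B₁, G₁, P₁, Y₁) and A^S → A^{SS} via (B₂, G₂, P₂, Y₂), then A → A^{SS} is a row stretching with parameter matrix Y = Y₁ Y₂ (suitably composed), the combined glue has full column rank, and the combined permutation is a permutation matrix. -/
open Matrix

lemma mul_permMat_transpose_apply {n κ γ : Type*} [Fintype γ] [DecidableEq γ]
    (M : Matrix n γ ℝ) (e : κ ≃ γ) (r : n) (m : κ) :
    (M * (permMat e)ᵀ) r m = M r (e m) := by
  simp [Matrix.mul_apply, permMat, mul_ite]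

lemma li_rows_iff {ι κ : Type*} [Fintype ι] [Fintype κ] (M : Matrix ι κ ℝ) :
    LinearIndependent ℝ M ↔ ∀ g : ι → ℝ, g ᵥ* M = 0 → g = 0 := by
  refine Fintype.linearIndependent_iff.trans ?_
  have key : ∀ g : ι → ℝ, (∑ i, g i • M i) = g ᵥ* M := by
    intro g
    funext j
    simp [Matrix.vecMul, dotProduct, Finset.sum_apply]
  constructor
  · intro h g hg
    funext i
    exact h g (by rw [key]; exact hg) i
  · intro h g hg i
    have := h g (by rw [← key]; exact hg)
    exact congrFun this i

lemma li_cols_iff {ι κ : Type*} [Fintype ι] [Fintype κ] (M : Matrix ι κ ℝ) :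
    LinearIndependent ℝ Mᵀ ↔ ∀ g : κ → ℝ, M *ᵥ g = 0 → g = 0 := by
  refine Fintype.linearIndependent_iff.trans ?_
  have key : ∀ g : κ → ℝ, (∑ j, g j • Mᵀ j) = M *ᵥ g := by
    intro g
    funext i
    simp [Matrix.mulVec, dotProduct, Finset.sum_apply, mul_comm]
  constructor
  · intro h g hg
    funext j
    exact h g (by rw [key]; exact hg) j
  · intro h g hg j
    have := h g (by rw [← key]; exact hg)
    exact congrFun this j

/-- Lemma 1 to Theorem 5: a sequence of two row stretchings is a row stretching.  If
`A → A^S` is a row stretching with data `(B₁, G₁, P₁, Y₁)` and `A^S → A^{SS}` one with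
data `(B₂, G₂, P₂, Y₂)`, then `A → A^{SS}` is a row stretching with parameter matrix
`Y = Y₁ Y₂`, carrier `B = B₁^S`, glue `G = [G₁^S G₂]` of full column rank, and the
combined column rearrangement a permutation. -/
theorem row_stretching_comp {ι κ μ γ₁ γ₂ : Type*}
    [Fintype ι] [Fintype κ] [Fintype μ] [Fintype γ₁] [Fintype γ₂]
    [DecidableEq ι] [DecidableEq κ] [DecidableEq μ] [DecidableEq γ₁] [DecidableEq γ₂]
    (A : Matrix ι ι ℝ) (AS : Matrix κ κ ℝ) (ASS : Matrix μ μ ℝ)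
    (B₁ : Matrix κ ι ℝ) (G₁ : Matrix κ γ₁ ℝ) (e₁ : κ ≃ ι ⊕ γ₁) (Y₁ : Matrix ι κ ℝ)
    (B₂ : Matrix μ κ ℝ) (G₂ : Matrix μ γ₂ ℝ) (e₂ : μ ≃ κ ⊕ γ₂) (Y₂ : Matrix κ μ ℝ)
    (h₁ : AS = fromCols B₁ G₁ * (permMat e₁)ᵀ)
    (hY₁B : Y₁ * B₁ = A) (hY₁G : Y₁ * G₁ = 0)
    (hY₁ : LinearIndependent ℝ Y₁) (hG₁ : LinearIndependent ℝ G₁ᵀ)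
    (h₂ : ASS = fromCols B₂ G₂ * (permMat e₂)ᵀ)
    (hY₂B : Y₂ * B₂ = AS) (hY₂G : Y₂ * G₂ = 0)
    (hY₂ : LinearIndependent ℝ Y₂) (hG₂ : LinearIndependent ℝ G₂ᵀ) :
    -- combined data: B := B₁^S, G := [G₁^S G₂], P := induced permutation, Y := Y₁Y₂
    (ASS = fromCols (Matrix.of fun r i => B₂ r (e₁.symm (Sum.inl i)))
          (fromCols (Matrix.of fun r g => B₂ r (e₁.symm (Sum.inr g))) G₂) *
        (permMat (e₂.trans ((e₁.sumCongr (Equiv.refl γ₂)).trans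
          (Equiv.sumAssoc ι γ₁ γ₂))))ᵀ) ∧
    (Y₁ * Y₂) * (Matrix.of fun r i => B₂ r (e₁.symm (Sum.inl i))) = A ∧
    (Y₁ * Y₂) * (fromCols (Matrix.of fun r g => B₂ r (e₁.symm (Sum.inr g))) G₂) = 0 ∧
    LinearIndependent ℝ (Y₁ * Y₂) ∧
    LinearIndependent ℝ (fromCols (Matrix.of fun r g => B₂ r (e₁.symm (Sum.inr g))) G₂)ᵀ := by
  set B1S : Matrix μ ι ℝ := Matrix.of fun r i => B₂ r (e₁.symm (Sum.inl i)) with hB1S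
  set G1S : Matrix μ γ₁ ℝ := Matrix.of fun r g => B₂ r (e₁.symm (Sum.inr g)) with hG1S
  -- AS entrywise
  have hAS : ∀ k c, AS k (e₁.symm c) = fromCols B₁ G₁ k c := by
    intro k c
    rw [h₁, mul_permMat_transpose_apply, Equiv.apply_symm_apply]
  -- Y₂ * B1S = B₁
  have hY₂B1S : Y₂ * B1S = B₁ := by
    ext k i
    have : (Y₂ * B₂) k (e₁.symm (Sum.inl i)) = ∑ m, Y₂ k m * B1S m i := by
      simp [Matrix.mul_apply, hB1S]
    rw [Matrix.mul_apply, ← this, hY₂B, hAS, fromCols_apply_inl]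
  have hY₂G1S : Y₂ * G1S = G₁ := by
    ext k g
    have : (Y₂ * B₂) k (e₁.symm (Sum.inr g)) = ∑ m, Y₂ k m * G1S m g := by
      simp [Matrix.mul_apply, hG1S]
    rw [Matrix.mul_apply, ← this, hY₂B, hAS, fromCols_apply_inr]
  refine ⟨?_, ?_, ?_, ?_, ?_⟩
  · -- ASS equality
    ext r m
    rw [mul_permMat_transpose_apply, h₂, mul_permMat_transpose_apply]
    rcases hm : e₂ m with k | g
    · simp only [Equiv.trans_apply, hm, Equiv.sumCongr_apply, Sum.map_inl]
      rcases hk : e₁ k with i | g₁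
      · simp only [Equiv.sumAssoc_apply_inl_inl, fromCols_apply_inl]
        rw [hB1S]
        simp [← hk]
      · simp only [Equiv.sumAssoc_apply_inl_inr, fromCols_apply_inr, fromCols_apply_inl]
        rw [hG1S]
        simp [← hk]
    · simp [Equiv.trans_apply, hm]
  · rw [Matrix.mul_assoc, hY₂B1S, hY₁B]
  · rw [Matrix.mul_assoc, Matrix.mul_fromCols, hY₂G1S, hY₂G, Matrix.mul_fromCols,
      hY₁G, Matrix.mul_zero]
    ext r c
    cases c <;> simp [fromCols]
  · rw [li_rows_iff]
    intro g hg
    rw [← Matrix.vecMul_vecMul] at hg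
    have h1 : g ᵥ* Y₁ = 0 := (li_rows_iff Y₂).mp hY₂ _ hg
    exact (li_rows_iff Y₁).mp hY₁ _ h1
  · rw [li_cols_iff]
    intro g hg
    have hgd : g = Sum.elim (fun a => g (Sum.inl a)) (fun b => g (Sum.inr b)) := by
      funext c; cases c <;> rfl
    rw [hgd, fromCols_mulVec_sumElim] at hg
    have h0 : G₁ *ᵥ (fun a => g (Sum.inl a)) = 0 := by
      have := congrArg (fun v => Y₂ *ᵥ v) hg
      simp only [Matrix.mulVec_add, Matrix.mulVec_mulVec] at this
      rw [hY₂G1S, hY₂G] at this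
      simpa using this
    have hg1 : (fun a => g (Sum.inl a)) = 0 := (li_cols_iff G₁).mp hG₁ _ h0
    rw [hg1] at hg
    simp only [Matrix.mulVec_zero, zero_add] at hg
    have hg2 : (fun b => g (Sum.inr b)) = 0 := (li_cols_iff G₂).mp hG₂ _ hg
    funext c
    cases c with
    | inl a => exact congrFun hg1 a
    | inr b => exact congrFun hg2 b
end

section
/- Let G be a matrix in which every column has exactly two nonzero entries, the row graph of G is a tree, and every non-loop edge of the row graph has weight 1 (i.e., no two rows share nonzeros in more than one common column). Then deleting any single row of G yields a nonsingular square matrix. -/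
open Matrix

/-- The row graph of a matrix: vertices are rows; two distinct rows are adjacent when
they have nonzero entries in some common column. -/
def rowGraph {ρ κ : Type*} (M : Matrix ρ κ ℝ) : SimpleGraph ρ where
  Adj i j := i ≠ j ∧ ∃ c, M i c ≠ 0 ∧ M j c ≠ 0
  symm := ⟨by rintro i j ⟨h, c, h1, h2⟩; exact ⟨h.symm, c, h2, h1⟩⟩
  loopless := ⟨by intro i h; exact h.1 rfl⟩

/-- Lemma 3 to Theorem 5 (first part): if every column of `G` has exactly two nonzero
entries, the row graph of `G` is a tree, and every non-loop edge of the row graph has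
weight 1 (no two rows share nonzeros in more than one common column), then removing any
single row of `G` leaves a nonsingular (square) matrix. -/
theorem tree_glue_delete_row_nonsingular {n : ℕ} (G : Matrix (Fin (n + 1)) (Fin n) ℝ)
    (hcol : ∀ c, (Finset.univ.filter fun i => G i c ≠ 0).card = 2)
    (htree : (rowGraph G).IsTree)
    (hweight : ∀ i j, i ≠ j →
      (Finset.univ.filter fun c => G i c ≠ 0 ∧ G j c ≠ 0).card ≤ 1) :
    ∀ i₀ : Fin (n + 1), IsUnit (G.submatrix i₀.succAbove id).det := by
  intro i₀
  classical
  set Γ := rowGraph G with hΓ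
  set d : Fin (n + 1) → ℕ := fun v => Γ.dist v i₀ with hd
  set r : Fin n → Fin (n + 1) := fun k => i₀.succAbove k with hrdef
  have hrne : ∀ k, r k ≠ i₀ := fun k => i₀.succAbove_ne k
  have hrinj : Function.Injective r := fun a b h => i₀.succAbove_right_injective h
  -- every non-root vertex has a "parent": an adjacent vertex one step closer to i₀
  have key : ∀ k : Fin n, ∃ (w : Fin (n + 1)) (c : Fin n),
      w ≠ r k ∧ d w + 1 = d (r k) ∧ G (r k) c ≠ 0 ∧ G w c ≠ 0 := by
    intro k
    have hreach : Γ.Reachable (r k) i₀ := htree.isConnected.preconnected (r k) i₀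
    obtain ⟨p, hp⟩ := hreach.exists_walk_length_eq_dist
    obtain ⟨w, hadj, q, rfl⟩ := p.exists_eq_cons_of_ne (hrne k)
    have hqlen : d w ≤ q.length := SimpleGraph.dist_le q
    have hwalk2 : d (r k) ≤ d w + 1 := by
      obtain ⟨q', hq'⟩ := (htree.isConnected.preconnected w i₀).exists_walk_length_eq_dist
      have := SimpleGraph.dist_le (SimpleGraph.Walk.cons hadj q')
      simpa [hq'] using this
    have hlen : d (r k) = q.length + 1 := by
      simpa using hp.symm
    obtain ⟨c, hc1, hc2⟩ := hadj.2
    exact ⟨w, c, hadj.1.symm, by omega, hc1, hc2⟩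
  choose par col hparne hpard hc1 hc2 using key
  -- basic fact: the nonzero rows of column `col k` are exactly `{r k, par k}`
  have hset : ∀ k, (Finset.univ.filter fun i => G i (col k) ≠ 0) = {r k, par k} := by
    intro k
    symm
    apply Finset.eq_of_subset_of_card_le
    · intro x hx
      simp only [Finset.mem_insert, Finset.mem_singleton] at hx
      rcases hx with rfl | rfl
      · simp [hc1 k]
      · simp [hc2 k]
    · rw [hcol (col k)]
      rw [Finset.card_insert_of_notMem (by simp [(hparne k).symm]), Finset.card_singleton]
  -- injectivity of the parent-edge map
  have hcolinj : Function.Injective col := by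
    intro a b hab
    by_contra hne
    have hrb : r b ∈ ({r a, par a} : Finset (Fin (n + 1))) := by
      rw [← hset a]; simp [hab ▸ hc1 b]
    have hra : r a ∈ ({r b, par b} : Finset (Fin (n + 1))) := by
      rw [← hset b]; simp [hab ▸ hc1 a]
    simp only [Finset.mem_insert, Finset.mem_singleton] at hrb hra
    have h1 : r b = par a := hrb.resolve_left (fun h => hne (hrinj h).symm)
    have h2 : r a = par b := hra.resolve_left (fun h => hne (hrinj h))
    have e1 : d (r b) + 1 = d (r a) := by rw [h1]; exact hpard a
    have e2 : d (r a) + 1 = d (r b) := by rw [h2]; exact hpard b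
    omega
  let σ : Equiv.Perm (Fin n) := Equiv.ofBijective col (Finite.injective_iff_bijective.mp hcolinj)
  let τ : Equiv.Perm (Fin n) := Tuple.sort (fun k => d (r k))
  have hmono : Monotone ((fun k => d (r k)) ∘ τ) := Tuple.monotone_sort _
  -- the rearranged matrix
  set B : Matrix (Fin n) (Fin n) ℝ := fun a b => G (r (τ a)) (col (τ b)) with hB
  have htri : B.BlockTriangular id := by
    intro i j hji
    by_contra hBij
    have hmem : r (τ i) ∈ ({r (τ j), par (τ j)} : Finset (Fin (n + 1))) := by
      rw [← hset (τ j)]; simpa using hBij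
    simp only [Finset.mem_insert, Finset.mem_singleton] at hmem
    have hij : (i : Fin n) ≠ j := ne_of_gt hji
    have hij' : r (τ i) ≠ r (τ j) := fun h => hij (τ.injective (hrinj h))
    have h1 : r (τ i) = par (τ j) := hmem.resolve_left hij'
    have h2 : d (r (τ i)) + 1 = d (r (τ j)) := h1 ▸ hpard (τ j)
    have h3 : d (r (τ j)) ≤ d (r (τ i)) := hmono (le_of_lt hji)
    omega
  have hdetB : B.det = ∏ i, B i i := Matrix.det_of_upperTriangular htri
  have hdiag : ∀ i, B i i ≠ 0 := fun i => hc1 (τ i)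
  have hBne : B.det ≠ 0 := by
    rw [hdetB]; exact Finset.prod_ne_zero_iff.mpr fun i _ => hdiag i
  -- relate B to the original submatrix
  set A : Matrix (Fin n) (Fin n) ℝ := G.submatrix i₀.succAbove id with hA
  have hBeq : B = ((A.submatrix id ⇑σ).submatrix ⇑τ ⇑τ) := rfl
  have hdet1 : B.det = (A.submatrix id ⇑σ).det := by
    rw [hBeq, Matrix.det_submatrix_equiv_self]
  have hdet2 : (A.submatrix id ⇑σ).det = Equiv.Perm.sign σ * A.det :=
    Matrix.det_permute' σ A
  have hAne : A.det ≠ 0 := by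
    intro h
    rw [hdet1, hdet2, h, mul_zero] at hBne
    exact hBne rfl
  exact isUnit_iff_ne_zero.mpr hAne
end
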